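/- In the earliest-start (ASAP) schedule of the tiled FlatTree algorithm (with TT kernels) on a p × q tiled matrix with p > q > 1, for every pair (i,k) with 2 ≤ k ≤ q and k < i ≤ p, the task TTQRT(i, k, k) zeroing tile (i,k) completes exactly at time 6i + 16k − 22. -/

import Mathlib

namespace TiledQR

/-- An elimination `elim(i, piv, k)`: tile `(i, k)` is zeroed out by an orthogonal
transformation combining row `i` with pivot row `piv`. -/
structure Elim where
  i : ℕ
  piv : ℕ
  k : ℕ
deriving DecidableEq

/-- `Before L e f` : the elimination `e` occurs strictly before `f` in the list `L`. -/
def Before (L : List Elim) (e f : Elim) : Prop :=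
  ∃ a b : Fin L.length, (a : ℕ) < b ∧ L.get a = e ∧ L.get b = f

/-- `L` is a valid elimination list for a `p × q` tiled matrix: it contains exactly one
elimination for every sub-diagonal tile `(i, k)` (`1 ≤ k ≤ min p q`, `k < i ≤ p`);
every elimination `elim(i, piv, k)` comes after all eliminations `elim(i, *, k')` and
`elim(piv, *, k')` with `k' < k`, and before the elimination `elim(piv, *, k)` of its
pivot row. -/
def ValidElimList (p q : ℕ) (L : List Elim) : Prop :=
  L.Nodup ∧
  (∀ e ∈ L, 1 ≤ e.k ∧ e.k ≤ min p q ∧ e.k < e.i ∧ e.i ≤ p ∧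
      1 ≤ e.piv ∧ e.piv ≤ p ∧ e.piv ≠ e.i) ∧
  (∀ i k, 1 ≤ k → k ≤ min p q → k < i → i ≤ p → ∃! piv, Elim.mk i piv k ∈ L) ∧
  (∀ a b : Fin L.length, (L.get b).k < (L.get a).k →
      ((L.get b).i = (L.get a).i ∨ (L.get b).i = (L.get a).piv) → (b : ℕ) < a) ∧
  (∀ a b : Fin L.length, (L.get b).k = (L.get a).k →
      (L.get b).i = (L.get a).piv → (a : ℕ) < b)

/-- The tasks of the tiled QR factorization with TT (triangle-on-top-of-triangle)
kernels. -/
inductive Task where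
  | GEQRT (r k : ℕ)
  | UNMQR (r k j : ℕ)
  | TTQRT (i piv k : ℕ)
  | TTMQR (i piv k j : ℕ)
deriving DecidableEq

/-- Weights of the TT kernels, the unit being `n_b ^ 3 / 3` flops. -/
def weight : Task → ℕ
  | .GEQRT _ _ => 4
  | .UNMQR _ _ _ => 6
  | .TTQRT _ _ _ => 2
  | .TTMQR _ _ _ _ => 6

/-- The tasks associated with a `p × q` tiled matrix and an elimination list `L`:
a factorization `GEQRT(r, k)` and updates `UNMQR(r, k, j)` (`k < j ≤ q`) for every tile
`(r, k)` with `k ≤ r ≤ p`, and, for every elimination `elim(i, piv, k)` of `L`, a task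
`TTQRT(i, piv, k)` and updates `TTMQR(i, piv, k, j)` for `k < j ≤ q`. -/
def InTasks (p q : ℕ) (L : List Elim) : Task → Prop
  | .GEQRT r k => 1 ≤ k ∧ k ≤ min p q ∧ k ≤ r ∧ r ≤ p
  | .UNMQR r k j => 1 ≤ k ∧ k ≤ min p q ∧ k ≤ r ∧ r ≤ p ∧ k < j ∧ j ≤ q
  | .TTQRT i piv k => Elim.mk i piv k ∈ L
  | .TTMQR i piv k j => Elim.mk i piv k ∈ L ∧ k < j ∧ j ≤ q

/-- The precedence (dependence) relation between the TT tasks.  Besides the flow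
dependencies of the kernels, two tasks reading and writing a common tile
(a pivot tile reused by several eliminations of a column, or a pivot tile that is
subsequently zeroed out) are serialized in the order of the elimination list. -/
inductive Prec (L : List Elim) : Task → Task → Prop
  | geqrt_unmqr (r k j : ℕ) :
      Prec L (.GEQRT r k) (.UNMQR r k j)
  | geqrt_ttqrt_row (i piv k : ℕ) :
      Prec L (.GEQRT i k) (.TTQRT i piv k)
  | geqrt_ttqrt_piv (i piv k : ℕ) :
      Prec L (.GEQRT piv k) (.TTQRT i piv k)
  | ttqrt_ttmqr (i piv k j : ℕ) :
      Prec L (.TTQRT i piv k) (.TTMQR i piv k j)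
  | unmqr_ttmqr_row (i piv k j : ℕ) :
      Prec L (.UNMQR i k j) (.TTMQR i piv k j)
  | unmqr_ttmqr_piv (i piv k j : ℕ) :
      Prec L (.UNMQR piv k j) (.TTMQR i piv k j)
  | ttmqr_geqrt (a b i k : ℕ) : 2 ≤ k → (a = i ∨ b = i) →
      Prec L (.TTMQR a b (k - 1) k) (.GEQRT i k)
  | ttqrt_serial (i i' piv k : ℕ) :
      Before L (Elim.mk i piv k) (Elim.mk i' piv k) →
      Prec L (.TTQRT i piv k) (.TTQRT i' piv k)
  | ttmqr_serial (i i' piv k j : ℕ) :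
      Before L (Elim.mk i piv k) (Elim.mk i' piv k) →
      Prec L (.TTMQR i piv k j) (.TTMQR i' piv k j)
  | ttqrt_pivot_use (a i piv k : ℕ) :
      Prec L (.TTQRT a i k) (.TTQRT i piv k)
  | ttmqr_pivot_use (a i piv k j : ℕ) :
      Prec L (.TTMQR a i k j) (.TTMQR i piv k j)

/-- A path in the weighted task DAG. -/
def IsPath (p q : ℕ) (L : List Elim) (path : List Task) : Prop :=
  (∀ t ∈ path, InTasks p q L t) ∧ path.Chain' (Prec L)

/-- The critical path length of the tiled algorithm given by the elimination list `L`: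
the maximum total weight of a path in the weighted task DAG (equivalently, the makespan
of the earliest-start schedule with unboundedly many processors). -/
noncomputable def cpLength (p q : ℕ) (L : List Elim) : ℕ :=
  sSup { w : ℕ | ∃ path : List Task, IsPath p q L path ∧ w = (path.map weight).sum }
/-- The FlatTree (Sameh-Kuck) elimination list: all eliminations of column `k` use the
diagonal row `k` as pivot; eliminations are listed column by column and, within a
column, by increasing row index. -/
def flatTreeList (p q : ℕ) : List Elim :=
  (List.range' 1 (min p q)).flatMap fun k =>
    (List.range' (k + 1) (p - k)).map fun i => Elim.mk i k k
/-- The completion time of task `t` in the earliest-start (ASAP) schedule with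
unboundedly many processors: the maximum total weight of a path ending at `t`. -/
noncomputable def finishTime (p q : ℕ) (L : List Elim) (t : Task) : ℕ :=
  sSup { w : ℕ | ∃ path : List Task, IsPath p q L path ∧ path.getLast? = some t ∧
      w = (path.map weight).sum }
/-! ### Auxiliary material for the proof -/

/-- Lexicographic order on (column, row) of eliminations. -/
def lexR (e f : Elim) : Prop := e.k < f.k ∨ (e.k = f.k ∧ e.i < f.i)

lemma lexR_mk {i piv k i' piv' k' : ℕ} :
    lexR (Elim.mk i piv k) (Elim.mk i' piv' k') ↔ k < k' ∨ (k = k' ∧ i < i') :=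
  Iff.rfl

lemma mem_flatTree {p q i piv k : ℕ} :
    Elim.mk i piv k ∈ flatTreeList p q ↔
      piv = k ∧ 1 ≤ k ∧ k ≤ min p q ∧ k < i ∧ i ≤ p := by
  simp only [flatTreeList, List.mem_flatMap, List.mem_map, List.mem_range']
  constructor
  · rintro ⟨a, ⟨c, hc, rfl⟩, b, ⟨d, hd, rfl⟩, he⟩
    rcases he
    omega
  · rintro ⟨hpk, h1, h2, h3, h4⟩
    exact ⟨k, ⟨k - 1, by omega, by omega⟩,
      ⟨i, ⟨i - (k + 1), by omega, by omega⟩, by rw [hpk]⟩⟩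

lemma flatTree_sorted (p q : ℕ) : (flatTreeList p q).Pairwise lexR := by
  unfold flatTreeList
  have key : ∀ (n s : ℕ), ((List.range' s n).flatMap fun k =>
      (List.range' (k + 1) (p - k)).map fun i => Elim.mk i k k).Pairwise lexR := by
    intro n
    induction n with
    | zero => intro s; simp
    | succ m ih =>
      intro s
      rw [List.range'_succ, List.flatMap_cons, List.pairwise_append]
      refine ⟨?_, ih (s + 1), ?_⟩
      · rw [List.pairwise_map]
        exact (List.pairwise_lt_range' (s := s + 1) (n := p - s)).imp
          (fun h => Or.inr ⟨rfl, h⟩)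
      · intro x hx y hy
        simp only [List.mem_map] at hx
        obtain ⟨a, _, rfl⟩ := hx
        simp only [List.mem_flatMap, List.mem_map] at hy
        obtain ⟨k', hk', b, _, rfl⟩ := hy
        rw [List.mem_range'] at hk'
        obtain ⟨c, hc, rfl⟩ := hk'
        exact Or.inl (show s < s + 1 + 1 * c by omega)
  exact key (min p q) 1

lemma lexR_of_before {p q : ℕ} {e f : Elim}
    (h : Before (flatTreeList p q) e f) : lexR e f := by
  obtain ⟨a, b, hab, ha, hb⟩ := h
  subst ha; subst hb
  exact List.pairwise_iff_get.1 (flatTree_sorted p q) a b (Fin.lt_def.mpr hab)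

lemma before_of {p q : ℕ} {e f : Elim} (he : e ∈ flatTreeList p q)
    (hf : f ∈ flatTreeList p q) (h : lexR e f) : Before (flatTreeList p q) e f := by
  obtain ⟨a, ha⟩ := List.mem_iff_get.1 he
  obtain ⟨b, hb⟩ := List.mem_iff_get.1 hf
  rcases lt_trichotomy (a : ℕ) (b : ℕ) with hab | hab | hab
  · exact ⟨a, b, hab, ha, hb⟩
  · exfalso
    have hab' : a = b := Fin.ext hab
    subst hab'
    rw [ha] at hb; subst hb
    rcases h with h | ⟨_, h⟩ <;> omega
  · exfalso
    have h2 := List.pairwise_iff_get.1 (flatTree_sorted p q) b a (Fin.lt_def.mpr hab)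
    rw [ha, hb] at h2
    rcases h with h | ⟨h1, h1'⟩ <;> rcases h2 with h' | ⟨h2', h2''⟩ <;> omega

/-- The ASAP finish time of each task in the FlatTree schedule (a potential
function certifying the upper bound on path weights). -/
def phi : Task → ℕ
  | .GEQRT r k => if k ≤ 1 then 4 else 6 * r + 16 * k - 24
  | .UNMQR r k _ => if k ≤ 1 then 10 else 6 * r + 16 * k - 18
  | .TTQRT i _ k => if k ≤ 1 then 2 * i + 2 else 6 * i + 16 * k - 22
  | .TTMQR i _ k _ => 6 * i + 16 * k - 12

lemma weight_le_phi {p q : ℕ} {t : Task}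
    (ht : InTasks p q (flatTreeList p q) t) : weight t ≤ phi t := by
  cases t with
  | GEQRT r k => simp only [weight, phi]; split_ifs <;> omega
  | UNMQR r k j => simp only [weight, phi]; split_ifs <;> omega
  | TTQRT i piv k => simp only [weight, phi]; split_ifs <;> omega
  | TTMQR i piv k j =>
    obtain ⟨hm, _, _⟩ := ht
    rw [mem_flatTree] at hm
    simp only [weight, phi]
    omega

lemma edge_le {p q : ℕ} {s t : Task} (hs : InTasks p q (flatTreeList p q) s)
    (ht : InTasks p q (flatTreeList p q) t) (h : Prec (flatTreeList p q) s t) :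
    phi s + weight t ≤ phi t := by
  cases h with
  | geqrt_unmqr r k j =>
    simp only [phi, weight]; split_ifs <;> omega
  | geqrt_ttqrt_row i piv k =>
    have hm := mem_flatTree.1 ht
    simp only [phi, weight]; split_ifs <;> omega
  | geqrt_ttqrt_piv i piv k =>
    obtain ⟨hpiv, h1, h2, h3, h4⟩ := mem_flatTree.1 ht
    subst hpiv
    simp only [phi, weight]; split_ifs <;> omega
  | ttqrt_ttmqr i piv k j =>
    obtain ⟨hm, _, _⟩ := ht
    obtain ⟨hpiv, h1, h2, h3, h4⟩ := mem_flatTree.1 hm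
    simp only [phi, weight]; split_ifs <;> omega
  | unmqr_ttmqr_row i piv k j =>
    obtain ⟨hm, _, _⟩ := ht
    obtain ⟨hpiv, h1, h2, h3, h4⟩ := mem_flatTree.1 hm
    simp only [phi, weight]; split_ifs <;> omega
  | unmqr_ttmqr_piv i piv k j =>
    obtain ⟨hm, _, _⟩ := ht
    obtain ⟨hpiv, h1, h2, h3, h4⟩ := mem_flatTree.1 hm
    subst hpiv
    simp only [phi, weight]; split_ifs <;> omega
  | ttmqr_geqrt a b i k hk2 hab =>
    obtain ⟨hm, _, _⟩ := hs
    obtain ⟨hpiv, h1, h2, h3, h4⟩ := mem_flatTree.1 hm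
    obtain ⟨g1, g2, g3, g4⟩ := ht
    rcases hab with rfl | rfl
    · simp only [phi, weight]; split_ifs <;> omega
    · omega
  | ttqrt_serial i i' piv k hB =>
    have hlex := (lexR_mk).1 (lexR_of_before hB)
    obtain ⟨hpiv, h1, h2, h3, h4⟩ := mem_flatTree.1 hs
    obtain ⟨hpiv', h1', h2', h3', h4'⟩ := mem_flatTree.1 ht
    rcases hlex with h' | ⟨_, h'⟩ <;> simp only [phi, weight] <;> split_ifs <;> omega
  | ttmqr_serial i i' piv k j hB =>
    have hlex := (lexR_mk).1 (lexR_of_before hB)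
    obtain ⟨hm, _, _⟩ := hs
    obtain ⟨hm', _, _⟩ := ht
    obtain ⟨hpiv, h1, h2, h3, h4⟩ := mem_flatTree.1 hm
    obtain ⟨hpiv', h1', h2', h3', h4'⟩ := mem_flatTree.1 hm'
    rcases hlex with h' | ⟨_, h'⟩ <;> simp only [phi, weight] <;> omega
  | ttqrt_pivot_use a i piv k =>
    obtain ⟨hpiv, h1, h2, h3, h4⟩ := mem_flatTree.1 hs
    obtain ⟨hpiv', h1', h2', h3', h4'⟩ := mem_flatTree.1 ht
    omega
  | ttmqr_pivot_use a i piv k j =>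
    obtain ⟨hm, _, _⟩ := hs
    obtain ⟨hm', _, _⟩ := ht
    obtain ⟨hpiv, h1, h2, h3, h4⟩ := mem_flatTree.1 hm
    obtain ⟨hpiv', h1', h2', h3', h4'⟩ := mem_flatTree.1 hm'
    omega

lemma sum_le_phi {p q : ℕ} (l : List Task) :
    ∀ t : Task, (∀ x ∈ l, InTasks p q (flatTreeList p q) x) →
    l.Chain' (Prec (flatTreeList p q)) → l.getLast? = some t →
    (l.map weight).sum ≤ phi t := by
  induction l using List.reverseRecOn with
  | nil => intro t _ _ h; simp at h
  | append_singleton l x ih =>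
    intro t hmem hchain hlast
    rw [List.getLast?_concat] at hlast
    have hxeq : x = t := by injection hlast
    subst hxeq
    rw [List.map_append, List.sum_append]
    simp only [List.map_cons, List.map_nil, List.sum_cons, List.sum_nil, add_zero]
    rcases hl : l.getLast? with _ | s
    · have hnil : l = [] := List.getLast?_eq_none_iff.1 hl
      subst hnil
      simpa using weight_le_phi (hmem x (by simp))
    · have hs : s ∈ l := by
        obtain ⟨hne, rfl⟩ := List.mem_getLast?_eq_getLast (l := l) (x := s) hl
        exact List.getLast_mem hne
      have hchain' := List.isChain_append.1 hchain
      have hprec : Prec (flatTreeList p q) s x := hchain'.2.2 s hl x rfl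
      have h1 := ih s (fun y hy => hmem y (by simp [hy])) hchain'.1 hl
      have h2 := edge_le (hmem s (by simp [hs])) (hmem x (by simp)) hprec
      omega

/-- First part of the critical path: down column 1. -/
def bpath : ℕ → List Task
  | 0 => [.GEQRT 2 1, .UNMQR 2 1 2, .TTMQR 2 1 1 2]
  | n + 1 => bpath n ++ [.TTMQR (n + 3) 1 1 2]

lemma bpath_spec (p q : ℕ) (hq : 2 ≤ q) (hpq : q < p) :
    ∀ n, n + 2 ≤ p →
    (∀ t ∈ bpath n, InTasks p q (flatTreeList p q) t) ∧
    (bpath n).Chain' (Prec (flatTreeList p q)) ∧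
    (bpath n).getLast? = some (.TTMQR (n + 2) 1 1 2) ∧
    ((bpath n).map weight).sum = 6 * n + 16 := by
  intro n
  induction n with
  | zero =>
    intro hp
    refine ⟨?_, ?_, rfl, rfl⟩
    · intro t ht
      simp only [bpath, List.mem_cons, List.not_mem_nil, or_false] at ht
      rcases ht with rfl | rfl | rfl
      · exact ⟨by omega, by omega, by omega, by omega⟩
      · exact ⟨by omega, by omega, by omega, by omega, by omega, by omega⟩
      · exact ⟨mem_flatTree.2 ⟨rfl, by omega, by omega, by omega, by omega⟩,
          by omega, by omega⟩
    · exact List.isChain_cons_cons.2 ⟨Prec.geqrt_unmqr 2 1 2,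
        List.isChain_cons_cons.2 ⟨Prec.unmqr_ttmqr_row 2 1 1 2, List.isChain_singleton _⟩⟩
  | succ m ih =>
    intro hp
    obtain ⟨hmem, hchain, hlast, hsum⟩ := ih (by omega)
    have hstep : bpath (m + 1) = bpath m ++ [.TTMQR (m + 3) 1 1 2] := rfl
    refine ⟨?_, ?_, ?_, ?_⟩
    · intro t ht
      rw [hstep, List.mem_append] at ht
      rcases ht with h | h
      · exact hmem t h
      · simp only [List.mem_singleton] at h
        subst h
        exact ⟨mem_flatTree.2 ⟨rfl, by omega, by omega, by omega, by omega⟩,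
          by omega, by omega⟩
    · rw [hstep]; unfold List.Chain'; rw [List.isChain_append]
      refine ⟨hchain, List.isChain_singleton _, ?_⟩
      intro x hx y hy
      rw [hlast] at hx
      simp only [Option.mem_def, Option.some.injEq] at hx
      simp only [List.head?_cons, Option.mem_def, Option.some.injEq] at hy
      subst hx; subst hy
      exact Prec.ttmqr_serial (m + 2) (m + 3) 1 1 2
        (before_of (mem_flatTree.2 ⟨rfl, by omega, by omega, by omega, by omega⟩)
          (mem_flatTree.2 ⟨rfl, by omega, by omega, by omega, by omega⟩)
          (lexR_mk.2 (Or.inr ⟨rfl, by omega⟩)))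
    · rw [hstep, List.getLast?_concat]
    · rw [hstep, List.map_append, List.sum_append, hsum]
      simp only [List.map_cons, List.map_nil, List.sum_cons, List.sum_nil]
      simp only [weight]
      omega

/-- The rest of the critical path: through columns `2, …, c+1`. -/
def cpath (i : ℕ) : ℕ → List Task
  | 0 => bpath (i - 2)
  | c + 1 => cpath i c ++
      [.GEQRT i (c + 2), .UNMQR i (c + 2) (c + 3), .TTMQR i (c + 2) (c + 2) (c + 3)]

lemma cpath_spec (p q i k : ℕ) (hq : 2 ≤ q) (hpq : q < p) (hk : 2 ≤ k)
    (hkq : k ≤ q) (hki : k < i) (hip : i ≤ p) :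
    ∀ c, c + 2 ≤ k →
    (∀ t ∈ cpath i c, InTasks p q (flatTreeList p q) t) ∧
    (cpath i c).Chain' (Prec (flatTreeList p q)) ∧
    (cpath i c).getLast? = some (.TTMQR i (c + 1) (c + 1) (c + 2)) ∧
    ((cpath i c).map weight).sum = 6 * i + 16 * c + 4 := by
  intro c
  induction c with
  | zero =>
    intro _
    obtain ⟨hmem, hchain, hlast, hsum⟩ := bpath_spec p q hq hpq (i - 2) (by omega)
    have hi : i - 2 + 2 = i := by omega
    rw [hi] at hlast
    exact ⟨hmem, hchain, hlast, by rw [show cpath i 0 = bpath (i-2) from rfl, hsum]; omega⟩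
  | succ m ih =>
    intro hc
    obtain ⟨hmem, hchain, hlast, hsum⟩ := ih (by omega)
    have hstep : cpath i (m + 1) = cpath i m ++
        [.GEQRT i (m + 2), .UNMQR i (m + 2) (m + 3),
          .TTMQR i (m + 2) (m + 2) (m + 3)] := rfl
    refine ⟨?_, ?_, ?_, ?_⟩
    · intro t ht
      rw [hstep, List.mem_append] at ht
      rcases ht with h | h
      · exact hmem t h
      · simp only [List.mem_cons, List.not_mem_nil, or_false] at h
        rcases h with rfl | rfl | rfl
        · exact ⟨by omega, by omega, by omega, by omega⟩
        · exact ⟨by omega, by omega, by omega, by omega, by omega, by omega⟩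
        · exact ⟨mem_flatTree.2 ⟨rfl, by omega, by omega, by omega, by omega⟩,
            by omega, by omega⟩
    · rw [hstep]; unfold List.Chain'; rw [List.isChain_append]
      refine ⟨hchain, ?_, ?_⟩
      · exact List.isChain_cons_cons.2 ⟨Prec.geqrt_unmqr i (m + 2) (m + 3),
          List.isChain_cons_cons.2 ⟨Prec.unmqr_ttmqr_row i (m + 2) (m + 2) (m + 3),
            List.isChain_singleton _⟩⟩
      · intro x hx y hy
        rw [hlast] at hx
        simp only [Option.mem_def, Option.some.injEq] at hx
        simp only [List.head?_cons, Option.mem_def, Option.some.injEq] at hy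
        subst hx; subst hy
        exact Prec.ttmqr_geqrt i (m + 1) i (m + 2) (by omega) (Or.inl rfl)
    · rw [hstep, List.getLast?_append_of_ne_nil _ (by simp)]
      rfl
    · rw [hstep, List.map_append, List.sum_append, hsum]
      simp only [List.map_cons, List.map_nil, List.sum_cons, List.sum_nil]
      simp only [weight]
      omega

/-- In the earliest-start schedule of the tiled FlatTree algorithm (TT kernels) on a
`p × q` matrix with `p > q > 1`, tile `(i, k)` (for `2 ≤ k ≤ q` and `k < i ≤ p`) is
zeroed out, i.e. the task `TTQRT(i, k, k)` completes, exactly at time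
`6i + 16k - 22`. -/
theorem flatTree_ttqrt_finishTime (p q i k : ℕ) (hq : 1 < q) (hpq : q < p)
    (hk2 : 2 ≤ k) (hkq : k ≤ q) (hki : k < i) (hip : i ≤ p) :
    finishTime p q (flatTreeList p q) (Task.TTQRT i k k) = 6 * i + 16 * k - 22 := by
  obtain ⟨hmem, hchain, hlast, hsum⟩ :=
    cpath_spec p q i k hq hpq hk2 hkq hki hip (k - 2) (by omega)
  have h1 : k - 2 + 1 = k - 1 := by omega
  have h2 : k - 2 + 2 = k := by omega
  rw [h1, h2] at hlast
  set wit : List Task := cpath i (k - 2) ++ [.GEQRT i k] ++ [.TTQRT i k k] with hwit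
  have hwmem : ∀ t ∈ wit, InTasks p q (flatTreeList p q) t := by
    intro t ht
    rw [hwit] at ht
    simp only [List.append_assoc, List.mem_append, List.mem_cons,
      List.not_mem_nil, or_false] at ht
    rcases ht with h | h | h
    · exact hmem t h
    · subst h; exact ⟨by omega, by omega, by omega, by omega⟩
    · subst h; exact mem_flatTree.2 ⟨rfl, by omega, by omega, by omega, by omega⟩
  have hwchain : wit.Chain' (Prec (flatTreeList p q)) := by
    rw [hwit]; unfold List.Chain'; rw [List.isChain_append]
    refine ⟨?_, List.isChain_singleton _, ?_⟩
    · rw [List.isChain_append]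
      refine ⟨hchain, List.isChain_singleton _, ?_⟩
      intro x hx y hy
      rw [hlast] at hx
      simp only [Option.mem_def, Option.some.injEq] at hx
      simp only [List.head?_cons, Option.mem_def, Option.some.injEq] at hy
      subst hx; subst hy
      exact Prec.ttmqr_geqrt i (k - 1) i k hk2 (Or.inl rfl)
    · intro x hx y hy
      rw [List.getLast?_concat] at hx
      simp only [Option.mem_def, Option.some.injEq] at hx
      simp only [List.head?_cons, Option.mem_def, Option.some.injEq] at hy
      subst hx; subst hy
      exact Prec.geqrt_ttqrt_row i k k
  have hwlast : wit.getLast? = some (.TTQRT i k k) := by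
    rw [hwit]; exact List.getLast?_concat
  have hwsum : (wit.map weight).sum = 6 * i + 16 * k - 22 := by
    rw [hwit]
    simp only [List.map_append, List.sum_append, hsum]
    simp only [List.map_cons, List.map_nil, List.sum_cons, List.sum_nil]
    simp only [weight]
    omega
  have hub : ∀ w ∈ {w : ℕ | ∃ path : List Task,
      IsPath p q (flatTreeList p q) path ∧
      path.getLast? = some (Task.TTQRT i k k) ∧ w = (path.map weight).sum},
      w ≤ 6 * i + 16 * k - 22 := by
    rintro w ⟨path, ⟨hm, hc⟩, hl, rfl⟩
    have hle := sum_le_phi path (Task.TTQRT i k k) hm hc hl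
    simpa only [phi, if_neg (show ¬ k ≤ 1 by omega)] using hle
  have hin : 6 * i + 16 * k - 22 ∈ {w : ℕ | ∃ path : List Task,
      IsPath p q (flatTreeList p q) path ∧
      path.getLast? = some (Task.TTQRT i k k) ∧ w = (path.map weight).sum} :=
    ⟨wit, ⟨hwmem, hwchain⟩, hwlast, hwsum.symm⟩
  unfold finishTime
  exact le_antisymm (csSup_le ⟨_, hin⟩ hub)
    (le_csSup ⟨_, fun _ hw => hub _ hw⟩ hin)

end TiledQR
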